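/- Let (A, m, k) be a commutative local ring, M a finitely generated A-module, N a finitely generated A-module, and φ : N → Hom_A(M, A) an A-linear map. Assume the induced k-linear map N/mN → Hom_k(M/mM, k) (sending the class of n to the functional on M/mM induced by composing φ(n) with the quotient A → k) is injective. Then N is a finite free A-module of rank n = dim_k N/mN, φ is injective with image a direct summand of Hom_A(M, A), and there is a direct sum decomposition M = M₁ ⊕ M₂ with M₁ free of rank n such that the image of φ equals the submodule of functionals in Hom_A(M, A) vanishing on M₂ (canonically identified with Hom_A(M₁, A)). -/

import Mathlib

open TensorProduct

/-- **Splitting off a free dual summand.** Let `(A, 𝔪, k)` be a commutative local ring,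
`M`, `N` finitely generated `A`-modules, and `φ : N → Hom_A(M, A)` an `A`-linear map such
that the induced map `N/𝔪N → Hom_k(M/𝔪M, k)` is injective (equivalently: any `x : N` with
`φ x m ∈ 𝔪` for all `m : M` lies in `𝔪N`). Then `N` is free of rank
`n = dim_k N/𝔪N` (with `N/𝔪N` realized as `k ⊗[A] N`), `φ` is injective with image a direct
summand of the dual of `M`, and `M = M₁ ⊕ M₂` with `M₁` free of rank `n` and the image of
`φ` equal to the functionals vanishing on `M₂`. -/
theorem free_direct_summand_of_dual_of_residually_injective
    {A : Type*} [CommRing A] [IsLocalRing A]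
    {M N : Type*} [AddCommGroup M] [Module A M] [AddCommGroup N] [Module A N]
    [Module.Finite A M] [Module.Finite A N]
    (φ : N →ₗ[A] Module.Dual A M)
    (hinj : ∀ x : N, (∀ m : M, φ x m ∈ IsLocalRing.maximalIdeal A) →
      x ∈ (IsLocalRing.maximalIdeal A) • (⊤ : Submodule A N)) :
    ∃ n : ℕ,
      n = Module.finrank (IsLocalRing.ResidueField A)
        ((IsLocalRing.ResidueField A) ⊗[A] N) ∧
      (∃ _ : Module.Basis (Fin n) A N, True) ∧
      Function.Injective φ ∧
      (∃ K : Submodule A (Module.Dual A M), IsCompl (LinearMap.range φ) K) ∧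
      ∃ M₁ M₂ : Submodule A M, IsCompl M₁ M₂ ∧
        (∃ _ : Module.Basis (Fin n) A M₁, True) ∧
        ∀ f : Module.Dual A M, f ∈ LinearMap.range φ ↔ ∀ x ∈ M₂, f x = 0 := by
  classical
  set k := IsLocalRing.ResidueField A
  set 𝔪 := IsLocalRing.maximalIdeal A with h𝔪
  set n := Module.finrank k (k ⊗[A] N) with hn
  refine ⟨n, rfl, ?_⟩
  -- basis of k ⊗ N and lifts
  let b : Module.Basis (Fin n) k (k ⊗[A] N) := Module.finBasis k (k ⊗[A] N)
  have hmksurj : Function.Surjective ((TensorProduct.mk A k N) 1) :=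
    TensorProduct.mk_surjective A N k Ideal.Quotient.mk_surjective
  choose x hx using fun i => hmksurj (b i)
  have hx' : ∀ i, (1 : k) ⊗ₜ[A] x i = b i := hx
  -- membership in 𝔪 • ⊤ kills the residue tensor
  have hker : ∀ y : N, y ∈ (𝔪 • ⊤ : Submodule A N) → (1 : k) ⊗ₜ[A] y = 0 := by
    intro y hy
    have := (TensorProduct.quotTensorEquivQuotSMul N 𝔪).injective (a₁ := (1 : k) ⊗ₜ[A] y)
      (a₂ := 0)
    apply this
    rw [map_zero]
    have h1 : (1 : k) = Ideal.Quotient.mk 𝔪 (1 : A) := rfl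
    rw [h1, TensorProduct.quotTensorEquivQuotSMul_mk_tmul, one_smul,
      Submodule.Quotient.mk_eq_zero]
    exact hy
  -- residues of φ applied to lifts, as k-linear functionals on k ⊗ M
  let g : Fin n → (M →ₗ[A] k) := fun i => (Algebra.linearMap A k).comp (φ (x i))
  let fbar : Fin n → (k ⊗[A] M →ₗ[k] k) := fun i => LinearMap.liftBaseChange k (g i)
  have hfbar : ∀ i (m : M), fbar i ((1 : k) ⊗ₜ[A] m) = IsLocalRing.residue A (φ (x i) m) := by
    intro i m
    show (LinearMap.liftBaseChange k (g i)) ((1:k) ⊗ₜ[A] m) = _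
    rw [LinearMap.liftBaseChange_tmul, one_smul]
    show algebraMap A k _ = _
    rw [IsLocalRing.ResidueField.algebraMap_eq]
  let Pr : (k ⊗[A] M) →ₗ[k] (Fin n → k) := LinearMap.pi fbar
  -- Pr is surjective
  have hPr : Function.Surjective Pr := by
    rw [← LinearMap.range_eq_top]
    by_contra hne
    obtain ⟨ξ, hξ0, hξ⟩ := Submodule.exists_dual_map_eq_bot_of_lt_top
      (lt_top_iff_ne_top.mpr hne) inferInstance
    set c : Fin n → k := fun i => ξ (fun j => if i = j then 1 else 0) with hc
    have hξw : ∀ w : Fin n → k, ξ w = ∑ i, w i * c i := by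
      intro w
      conv_lhs => rw [pi_eq_sum_univ w, map_sum]
      refine Finset.sum_congr rfl fun i _ => ?_
      rw [map_smul, smul_eq_mul]
    have hξPr : ∀ v, ξ (Pr v) = 0 := by
      intro v
      have : Pr v ∈ LinearMap.range Pr := ⟨v, rfl⟩
      have := Submodule.mem_map_of_mem (f := ξ) this
      rw [hξ] at this
      exact (Submodule.mem_bot k).mp this
    choose a ha using fun i => Ideal.Quotient.mk_surjective (I := 𝔪) (c i)
    set y : N := ∑ i, a i • x i with hy
    have hres : ∀ m : M, φ y m ∈ 𝔪 := by
      intro m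
      have h0 := hξPr ((1 : k) ⊗ₜ[A] m)
      rw [hξw] at h0
      have hPri : ∀ i, Pr ((1 : k) ⊗ₜ[A] m) i = IsLocalRing.residue A (φ (x i) m) := by
        intro i; exact hfbar i m
      rw [← Ideal.Quotient.eq_zero_iff_mem]
      have : φ y m = ∑ i, a i * φ (x i) m := by
        simp [hy, Finset.sum_apply, LinearMap.smul_apply, smul_eq_mul]
      rw [this]
      rw [map_sum]
      refine Eq.trans ?_ h0
      refine Finset.sum_congr rfl fun i _ => ?_
      rw [hPri, map_mul, ha]
      exact (mul_comm _ _)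
    have h10 : (1 : k) ⊗ₜ[A] y = 0 := hker y (hinj y hres)
    have hsum : ∑ i, c i • b i = 0 := by
      have h1 : ∀ i, c i • b i = (TensorProduct.mk A k N 1) (a i • x i) := by
        intro i
        rw [map_smul]
        show c i • b i = a i • ((1:k) ⊗ₜ[A] x i)
        rw [hx' i, ← algebraMap_smul k (a i) (b i), IsLocalRing.ResidueField.algebraMap_eq,
          show IsLocalRing.residue A (a i) = c i from ha i]
      calc ∑ i, c i • b i = (TensorProduct.mk A k N 1) (∑ i, a i • x i) := by
            rw [map_sum]; exact Finset.sum_congr rfl fun i _ => h1 i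
        _ = 0 := h10
    have hc0 : ∀ i, c i = 0 := by
      have hli := b.linearIndependent
      rw [Fintype.linearIndependent_iff] at hli
      exact hli c hsum
    apply hξ0
    refine LinearMap.ext fun w => ?_
    rw [hξw]
    simp [hc0]
  -- pick dual elements in M
  choose v hv using fun j => hPr (Pi.single j 1)
  have hmk : Function.Surjective ((TensorProduct.mk A k M) 1) :=
    TensorProduct.mk_surjective A M k Ideal.Quotient.mk_surjective
  choose mm hmm using fun j => hmk (v j)
  -- the matrix G and its invertibility
  set G : Matrix (Fin n) (Fin n) A := Matrix.of fun i j => φ (x i) (mm j) with hGdef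
  have hGres : ∀ i j, IsLocalRing.residue A (G i j) = if i = j then 1 else 0 := by
    intro i j
    have : IsLocalRing.residue A (φ (x i) (mm j)) = fbar i ((1:k) ⊗ₜ[A] mm j) := (hfbar i _).symm
    rw [hGdef]
    show IsLocalRing.residue A (φ (x i) (mm j)) = _
    rw [this, show (1:k) ⊗ₜ[A] mm j = v j from hmm j]
    have : fbar i (v j) = Pr (v j) i := rfl
    rw [this, hv j]
    simp [Pi.single_apply, eq_comm]
  have hGdet : IsUnit G.det := by
    have hmap : (IsLocalRing.residue A).mapMatrix G = 1 := by
      ext i j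
      simp [RingHom.mapMatrix_apply, Matrix.map_apply, hGres i j, Matrix.one_apply]
    have hres1 : IsLocalRing.residue A G.det = 1 := by
      rw [RingHom.map_det, hmap, Matrix.det_one]
    by_contra hu
    have hmem : Ideal.Quotient.mk 𝔪 G.det = 0 :=
      Ideal.Quotient.eq_zero_iff_mem.mpr ((IsLocalRing.mem_maximalIdeal _).mpr
        (mem_nonunits_iff.mpr hu))
    have h01 : (1 : k) = 0 := by rw [← hres1]; exact hmem
    exact one_ne_zero h01
  have := G.invertibleOfIsUnitDet hGdet
  -- span of x is everything
  have hspan : Submodule.span A (Set.range x) = ⊤ :=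
    IsLocalRing.span_eq_top_of_tmul_eq_basis x b hx'
  -- χ : N → Aⁿ
  set χ : N →ₗ[A] (Fin n → A) := LinearMap.pi (fun j => (LinearMap.applyₗ (mm j)).comp φ)
    with hχdef
  have hχ : ∀ y j, χ y j = φ y (mm j) := fun y j => rfl
  have hχsum : ∀ a : Fin n → A, χ (∑ i, a i • x i) = Matrix.vecMul a G := by
    intro a
    funext j
    have h1 : χ (∑ i, a i • x i) j = ∑ i, a i * φ (x i) (mm j) := by
      rw [hχ]
      simp only [map_sum, map_smul, LinearMap.sum_apply, LinearMap.smul_apply, smul_eq_mul]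
    rw [h1]
    simp [Matrix.vecMul, dotProduct, hGdef]
  have hχinj : Function.Injective χ := by
    rw [← LinearMap.ker_eq_bot]
    rw [Submodule.eq_bot_iff]
    intro y hy
    have hy' : y ∈ Submodule.span A (Set.range x) := by rw [hspan]; trivial
    obtain ⟨a, ha⟩ := (Submodule.mem_span_range_iff_exists_fun A).mp hy'
    have h0 : Matrix.vecMul a G = 0 := by
      rw [← hχsum, ha]; exact hy
    have : a = 0 := by
      have := congrArg (fun w => Matrix.vecMul w (⅟G)) h0
      simpa [Matrix.vecMul_vecMul, mul_invOf_self] using this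
    rw [← ha, this]
    simp
  have hχsurj : Function.Surjective χ := by
    intro cc
    refine ⟨∑ i, (Matrix.vecMul cc (⅟G)) i • x i, ?_⟩
    rw [hχsum, Matrix.vecMul_vecMul, invOf_mul_self, Matrix.vecMul_one]
  let e : N ≃ₗ[A] (Fin n → A) := LinearEquiv.ofBijective χ ⟨hχinj, hχsurj⟩
  have he : ∀ y, e y = χ y := fun y => rfl
  refine ⟨⟨(Pi.basisFun A (Fin n)).map e.symm, trivial⟩, ?_, ?_, ?_⟩
  -- φ injective
  · intro y₁ y₂ hy
    apply hχinj
    funext j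
    rw [hχ, hχ, hy]
  -- complement of range φ
  · set ev : Module.Dual A M →ₗ[A] (Fin n → A) := LinearMap.pi (fun j => LinearMap.applyₗ (mm j))
      with hevdef
    have hev : ∀ f j, ev f j = f (mm j) := fun f j => rfl
    have hevφ : ∀ y, ev (φ y) = χ y := fun y => rfl
    refine ⟨LinearMap.ker ev, ?_, ?_⟩
    · rw [Submodule.disjoint_def]
      rintro f ⟨y, rfl⟩ hf
      rw [LinearMap.mem_ker, hevφ] at hf
      have : y = 0 := hχinj (by rw [hf]; simp)
      rw [this, map_zero]
    · rw [codisjoint_iff, eq_top_iff]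
      intro f _
      set y := e.symm (ev f) with hy
      have h1 : φ y ∈ LinearMap.range φ := ⟨y, rfl⟩
      have h2 : f - φ y ∈ LinearMap.ker ev := by
        rw [LinearMap.mem_ker, map_sub, hevφ, ← he, hy, e.apply_symm_apply, sub_self]
      have : f = φ y + (f - φ y) := by abel
      rw [this]
      exact Submodule.add_mem_sup h1 h2
  -- M₁, M₂
  · set ψ : M →ₗ[A] (Fin n → A) := LinearMap.pi (fun i => φ (x i)) with hψdef
    have hψ : ∀ m i, ψ m i = φ (x i) m := fun m i => rfl
    set s : (Fin n → A) →ₗ[A] M :=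
      (Fintype.linearCombination A mm).comp (Matrix.mulVecLin (⅟G)) with hsdef
    have hs : ∀ c, s c = ∑ j, ((⅟G).mulVec c) j • mm j := by
      intro c
      rw [hsdef]
      simp [Fintype.linearCombination_apply, Matrix.mulVecLin_apply]
    have hψs : ∀ c, ψ (s c) = c := by
      intro c
      funext i
      rw [hψ, hs]
      simp only [map_sum, map_smul, smul_eq_mul]
      have h2 : ∑ j, ((⅟G).mulVec c) j * φ (x i) (mm j) = (G.mulVec ((⅟G).mulVec c)) i := by
        rw [Matrix.mulVec, dotProduct]
        exact Finset.sum_congr rfl fun j _ => mul_comm _ _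
      rw [h2, Matrix.mulVec_mulVec, mul_invOf_self, Matrix.one_mulVec]
    have hsinj : Function.Injective s := Function.LeftInverse.injective hψs
    -- the "vanishing on ker ψ" property of range φ
    have hvanish : ∀ y : N, ∀ m ∈ LinearMap.ker ψ, φ y m = 0 := by
      intro y m hm
      have hy' : y ∈ Submodule.span A (Set.range x) := by rw [hspan]; trivial
      induction hy' using Submodule.span_induction with
      | mem z hz =>
        obtain ⟨i, rfl⟩ := hz
        have := congrFun (LinearMap.mem_ker.mp hm) i
        simpa [hψ] using this
      | zero => simp
      | add z w _ _ hz hw => rw [map_add]; simp [LinearMap.add_apply, hz, hw]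
      | smul a z _ hz => rw [map_smul]; simp [LinearMap.smul_apply, hz]
    refine ⟨LinearMap.range s, LinearMap.ker ψ, ⟨?_, ?_⟩,
      ⟨(Pi.basisFun A (Fin n)).map (LinearEquiv.ofInjective s hsinj), trivial⟩, ?_⟩
    · rw [Submodule.disjoint_def]
      rintro m ⟨c, rfl⟩ hm
      rw [LinearMap.mem_ker] at hm
      have : c = 0 := by rw [← hψs c, hm]
      rw [this, map_zero]
    · rw [codisjoint_iff, eq_top_iff]
      intro m _
      have h1 : s (ψ m) ∈ LinearMap.range s := ⟨ψ m, rfl⟩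
      have h2 : m - s (ψ m) ∈ LinearMap.ker ψ := by
        rw [LinearMap.mem_ker, map_sub, hψs, sub_self]
      have : m = s (ψ m) + (m - s (ψ m)) := by abel
      rw [this]
      exact Submodule.add_mem_sup h1 h2
    · intro f
      constructor
      · rintro ⟨y, rfl⟩ m hm
        exact hvanish y m hm
      · intro hf
        set y := e.symm (fun j => f (mm j)) with hy
        refine ⟨y, ?_⟩
        have hval : ∀ j, φ y (mm j) = f (mm j) := by
          intro j
          have : χ y = fun j => f (mm j) := by rw [← he, hy, e.apply_symm_apply]
          have := congrFun this j
          rwa [hχ] at this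
        ext m
        have hdec : m = s (ψ m) + (m - s (ψ m)) := by abel
        have hkerm : m - s (ψ m) ∈ LinearMap.ker ψ := by
          rw [LinearMap.mem_ker, map_sub, hψs, sub_self]
        rw [hdec, map_add, map_add, hvanish y _ hkerm, hf _ hkerm]
        congr 1
        rw [hs]
        rw [map_sum, map_sum]
        exact Finset.sum_congr rfl fun j _ => by rw [map_smul, map_smul, hval j]
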